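/- Let T be a triangulated category with arbitrary small coproducts and let P be a compact generator of T. If F is an object of T such that the graded right Λ-module π_*F is projective, then for every object X of T the map Hom_T(F, X) → Hom_Λ(π_*F, π_*X), given by applying π_* (i.e. sending f to π_*f), is bijective. -/

import Mathlib

/-!
Shared setup: a triangulated category `C` with (co)products, a compact generator `P`,
the graded endomorphism ring `Λ = End_T(P)_* = Hom_T(Σ^* P, P)` and its category of
graded right modules, realized concretely.
-/

set_option linter.unusedSectionVars false

open CategoryTheory CategoryTheory.Limits CategoryTheory.Pretriangulated DirectSum

universe v u

namespace Franke

variable {C : Type u} [Category.{v} C] [Preadditive C] [HasZeroObject C]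
  [HasShift C ℤ] [∀ n : ℤ, (shiftFunctor C n).Additive] [Pretriangulated C]

/-- The degree `k` component of the graded endomorphism ring
`Λ = End_T(P)_* = Hom_T(Σ^* P, P)`: its degree `k` part is `Hom(P⟦k⟧, P)`. -/
abbrev lam (P : C) (k : ℤ) : Type v := (P⟦k⟧ ⟶ P)

/-- The right action of a degree `k` element `a : Σᵏ P ⟶ P` of `Λ` on a degree `n`
element `m : Σⁿ P ⟶ X` of the graded hom `π_* X = Hom_T(Σ^* P, X)`; the result is the
degree `n + k` element `Σ^{n+k} P ≅ (Σᵏ P)⟦n⟧ → Σⁿ P → X`. -/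
def gsmulHom (P : C) {X : C} {n k l : ℤ} (h : n + k = l)
    (m : P⟦n⟧ ⟶ X) (a : lam P k) : P⟦l⟧ ⟶ X :=
  (shiftFunctorAdd' C k n l (by omega)).hom.app P ≫ a⟦n⟧' ≫ m

/-- The multiplication of the graded endomorphism ring `Λ = End_T(P)_*`. -/
def gmul (P : C) {j k l : ℤ} (h : j + k = l) (a : lam P j) (b : lam P k) : lam P l :=
  gsmulHom P h a b

/-- The unit `1 ∈ Λ₀ = Hom(Σ⁰P, P)` of the graded endomorphism ring. -/
def gone (P : C) : lam P 0 := (shiftFunctorZero C ℤ).hom.app P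

/-- A ℤ-graded right module over the graded endomorphism ring `Λ = End_T(P)_*`.
The action is indexed by proofs `n + k = l` in order to avoid transport along
equalities of degrees. -/
structure GradedModule (P : C) where
  M : ℤ → Type v
  [acg : ∀ n, AddCommGroup (M n)]
  smul : ∀ {n k l : ℤ}, n + k = l → M n → lam P k → M l
  smul_addₓ : ∀ {n k l : ℤ} (h : n + k = l) (m : M n) (a b : lam P k),
    smul h m (a + b) = smul h m a + smul h m b
  add_smulₓ : ∀ {n k l : ℤ} (h : n + k = l) (m m' : M n) (a : lam P k),
    smul h (m + m') a = smul h m a + smul h m' a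
  smul_oneₓ : ∀ {n : ℤ} (m : M n), smul (add_zero n) m (gone P) = m
  smul_mulₓ : ∀ {n j k nj jk njk : ℤ} (h₁ : n + j = nj) (h₂ : j + k = jk)
    (h₃ : nj + k = njk) (h₄ : n + jk = njk) (m : M n) (a : lam P j) (b : lam P k),
    smul h₃ (smul h₁ m a) b = smul h₄ m (gmul P h₂ a b)

attribute [instance] GradedModule.acg

/-- The action of a fixed `a : Λₖ` as an additive map `Mₙ →+ M_{n+k}`. -/
def GradedModule.smulAddHom {P : C} (M : GradedModule P) {n k l : ℤ} (h : n + k = l)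
    (a : lam P k) : M.M n →+ M.M l :=
  AddMonoidHom.mk' (fun m => M.smul h m a) (fun m m' => M.add_smulₓ h m m' a)

theorem GradedModule.zero_smulₓ {P : C} (M : GradedModule P) {n k l : ℤ} (h : n + k = l)
    (a : lam P k) : M.smul h (0 : M.M n) a = 0 :=
  map_zero (M.smulAddHom h a)

/-- `π_* X = Hom_T(Σ^* P, X)` as a graded right `Λ`-module. -/
@[reducible] def piMod (P X : C) : GradedModule P where
  M n := P⟦n⟧ ⟶ X
  smul h m a := gsmulHom P h m a
  smul_addₓ h m a b := by
    simp [gsmulHom, Functor.map_add, Preadditive.comp_add, Preadditive.add_comp]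
  add_smulₓ h m m' a := by
    simp [gsmulHom, Preadditive.comp_add]
  smul_oneₓ m := by
    simp only [gsmulHom, gone]
    rw [shiftFunctorAdd'_zero_add_hom_app, ← Functor.map_comp_assoc, Iso.inv_hom_id_app]
    simp
  smul_mulₓ {n j k nj jk njk} h₁ h₂ h₃ h₄ m a b := by
    simp only [gsmulHom, gmul, Functor.map_comp, Category.assoc]
    have nat := ((shiftFunctorAdd' C j n nj (by omega)).hom).naturality b
    dsimp at nat
    rw [reassoc_of% nat]
    rw [← shiftFunctorAdd'_assoc_hom_app_assoc k j n jk nj njk (by omega) (by omega)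
      (by omega) P]


/-- A morphism of graded right `Λ`-modules: a degree-preserving `Λ`-linear additive map. -/
structure GHom {P : C} (M N : GradedModule P) where
  app : ∀ n : ℤ, M.M n →+ N.M n
  app_smul : ∀ {n k l : ℤ} (h : n + k = l) (m : M.M n) (a : lam P k),
    app l (M.smul h m a) = N.smul h (app n m) a

@[ext] theorem GHom.ext {P : C} {M N : GradedModule P} {f g : GHom M N}
    (h : ∀ (n : ℤ) (x : M.M n), f.app n x = g.app n x) : f = g := by
  obtain ⟨fa, _⟩ := f; obtain ⟨ga, _⟩ := g
  congr 1
  funext n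
  exact AddMonoidHom.ext (h n)

/-- The identity morphism of graded modules. -/
def GHom.id {P : C} (M : GradedModule P) : GHom M M :=
  ⟨fun _ => AddMonoidHom.id _, fun _ _ _ => rfl⟩

/-- Composition of morphisms of graded modules. -/
def GHom.comp {P : C} {M N K : GradedModule P} (g : GHom N K) (f : GHom M N) : GHom M K :=
  ⟨fun n => (g.app n).comp (f.app n), fun h m a => by
    simp only [AddMonoidHom.comp_apply, f.app_smul, g.app_smul]⟩

instance {P : C} {M N : GradedModule P} : Zero (GHom M N) :=
  ⟨{ app := fun _ => 0
     app_smul := fun h m a => by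
       show (0 : N.M _) = N.smul h (0 : N.M _) a
       exact (N.zero_smulₓ h a).symm }⟩

@[simp] theorem GHom.zero_app {P : C} {M N : GradedModule P} (n : ℤ) (x : M.M n) :
    (0 : GHom M N).app n x = 0 := rfl

/-- An isomorphism of graded right `Λ`-modules. -/
structure GIso {P : C} (M N : GradedModule P) where
  hom : GHom M N
  inv : GHom N M
  hom_inv_id : inv.comp hom = GHom.id M
  inv_hom_id : hom.comp inv = GHom.id N

/-- The shift `M[k]` of a graded module, with `M[k]ₙ = M_{n-k}`. -/
@[reducible] def gshift {P : C} (k : ℤ) (M : GradedModule P) : GradedModule P where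
  M n := M.M (n - k)
  smul h m a := M.smul (by omega) m a
  smul_addₓ h m a b := M.smul_addₓ _ m a b
  add_smulₓ h m m' a := M.add_smulₓ _ m m' a
  smul_oneₓ m := M.smul_oneₓ m
  smul_mulₓ h₁ h₂ h₃ h₄ m a b := M.smul_mulₓ _ h₂ _ _ m a b

/-- Surjectivity (in each degree) of a morphism of graded modules. -/
def GHom.Surj {P : C} {M N : GradedModule P} (f : GHom M N) : Prop :=
  ∀ n : ℤ, Function.Surjective (f.app n)

/-- A pair of composable morphisms of graded modules `0 → Z → E → B → 0`
forming a short exact sequence. -/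
structure IsShortExact {P : C} {Z E B : GradedModule P} (ι : GHom Z E) (ρ : GHom E B) : Prop where
  mono : ∀ n : ℤ, Function.Injective (ι.app n)
  epi : ∀ n : ℤ, Function.Surjective (ρ.app n)
  exact : ∀ (n : ℤ) (x : E.M n), ρ.app n x = 0 ↔ x ∈ Set.range (ι.app n)

/-- Exactness of `M → N → K` at `N` (including that the composite vanishes). -/
def ExactPair {P : C} {M N K : GradedModule P} (f : GHom M N) (g : GHom N K) : Prop :=
  ∀ (n : ℤ) (x : N.M n), g.app n x = 0 ↔ x ∈ Set.range (f.app n)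

/-- A graded module is projective if every degreewise surjection onto it splits against
any map from it: the usual lifting property. -/
def IsProjective {P : C} (Q : GradedModule P) : Prop :=
  ∀ (A B : GradedModule P) (e : GHom A B), e.Surj →
    ∀ f : GHom Q B, ∃ g : GHom Q A, e.comp g = f

/-- `projDimLE d M` says that the graded module `M` admits a projective resolution of
length at most `d`, i.e. has projective dimension `≤ d`. -/
def projDimLE {P : C} : ℕ → GradedModule P → Prop
  | 0, M => IsProjective M
  | d + 1, M => ∃ (F K : GradedModule P) (ε : GHom F M) (ι : GHom K F),
      IsProjective F ∧ IsShortExact ι ε ∧ projDimLE d K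

/-- `Λ = End_T(P)_*` is `N`-sparse: concentrated in degrees divisible by `N`. -/
def Sparse (P : C) (N : ℕ) : Prop :=
  ∀ k : ℤ, ¬ ((N : ℤ) ∣ k) → ∀ a : lam P k, a = 0

/-- A graded module belongs to `B[i]`: it is concentrated in degrees congruent
to `i` modulo `N`. -/
def InDegrees {P : C} (N : ℕ) (i : ZMod N) (M : GradedModule P) : Prop :=
  ∀ n : ℤ, (n : ZMod N) ≠ i → ∀ x : M.M n, x = 0

/-- The canonical comparison map `⊕ᵢ Hom(P, Xᵢ) → Hom(P, ∐ᵢ Xᵢ)`. -/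
noncomputable def compactComparison [HasCoproducts.{v} C] (P : C) {ι : Type v} (X : ι → C) :
    (⨁ i, (P ⟶ X i)) →+ (P ⟶ ∐ X) := by
  classical
  exact DirectSum.toAddMonoid fun i =>
    AddMonoidHom.mk' (fun f => f ≫ Sigma.ι X i) (fun f g => Preadditive.add_comp _ _ _ _ _ _)

/-- `P` is a compact object: `Hom(P, −)` commutes with small coproducts. -/
def IsCompactObj [HasCoproducts.{v} C] (P : C) : Prop :=
  ∀ (ι : Type v) (X : ι → C), Function.Bijective (compactComparison P X)

/-- `P` is a generator: an object all of whose graded homs from `P` vanish is zero. -/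
def IsGenerator (P : C) : Prop :=
  ∀ X : C, (∀ (n : ℤ) (f : P⟦n⟧ ⟶ X), f = 0) → IsZero X

/-- The morphism of graded modules `π_* f : π_* X → π_* Y` induced by `f : X ⟶ Y`. -/
def piGHom (P : C) {X Y : C} (f : X ⟶ Y) : GHom (piMod P X) (piMod P Y) where
  app n := AddMonoidHom.mk' (fun u => u ≫ f) fun u v => Preadditive.add_comp _ _ _ _ _ _
  app_smul h m a := by
    show (gsmulHom P h m a) ≫ f = gsmulHom P h (m ≫ f) a
    simp [gsmulHom]

/-- An extension of `B` by `Z` in the category of graded right `Λ`-modules: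
  a short exact sequence `0 → Z → E → B → 0`. -/
structure GExtension {P : C} (B Z : GradedModule P) where
  E : GradedModule P
  ι : GHom Z E
  ρ : GHom E B
  shortExact : IsShortExact ι ρ

/-- Two extensions are identified if there is a morphism of extensions between them
(such a morphism is automatically an isomorphism). -/
def GExtension.Rel {P : C} {B Z : GradedModule P} (e e' : GExtension B Z) : Prop :=
  ∃ φ : GHom e.E e'.E, φ.comp e.ι = e'.ι ∧ e'.ρ.comp φ = e.ρ

/-- `Ext¹_Λ(B, Z)`, realized as the set of equivalence classes of extensions
`0 → Z → E → B → 0` of graded right `Λ`-modules. -/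
def Ext1 {P : C} (B Z : GradedModule P) : Type _ :=
  Quot (GExtension.Rel (B := B) (Z := Z))

/-- Given `δ : Cc ⟶ ΣX`, the induced morphism of graded modules
`π_* Cc → (π_* X)[1]`, using the canonical identification `π_*(ΣX) ≅ (π_*X)[1]`. -/
noncomputable def triangleConnect (P : C) {X Cc : C} (δ : Cc ⟶ X⟦(1:ℤ)⟧) :
    GHom (piMod P Cc) (gshift 1 (piMod P X)) where
  app n := AddMonoidHom.mk' (fun u =>
    (shiftFunctorAdd' C n (-1) (n-1) (by omega)).hom.app P ≫ (u ≫ δ)⟦(-1:ℤ)⟧' ≫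
      (shiftFunctorCompIsoId C (1:ℤ) (-1) (by omega)).hom.app X) (fun u v => by
        simp [Preadditive.add_comp, Preadditive.comp_add, Functor.map_add])
  app_smul {n k l} h m a := by
    simp only [AddMonoidHom.mk'_apply]
    show (shiftFunctorAdd' C l (-1) (l-1) (by omega)).hom.app P ≫
        ((gsmulHom P h m a) ≫ δ)⟦(-1:ℤ)⟧' ≫
          (shiftFunctorCompIsoId C (1:ℤ) (-1) (by omega)).hom.app X =
      gsmulHom P (show (n-1) + k = l - 1 by omega)
        ((shiftFunctorAdd' C n (-1) (n-1) (by omega)).hom.app P ≫ (m ≫ δ)⟦(-1:ℤ)⟧' ≫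
          (shiftFunctorCompIsoId C (1:ℤ) (-1) (by omega)).hom.app X) a
    simp only [gsmulHom, Functor.map_comp, Category.assoc]
    have nat := ((shiftFunctorAdd' C n (-1) (n-1) (by omega : n + -1 = n - 1)).hom).naturality a
    dsimp at nat
    rw [reassoc_of% nat]
    rw [shiftFunctorAdd'_assoc_hom_app_assoc k n (-1) l (n-1) (l-1) (by omega) (by omega)
      (by omega) P]

section ExtGroups

instance {P : C} {M N : GradedModule P} : Add (GHom M N) :=
  ⟨fun f g =>
    { app := fun n => f.app n + g.app n
      app_smul := fun {n k l} h m a => by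
        show f.app l _ + g.app l _ = N.smul h (f.app n m + g.app n m) a
        rw [f.app_smul, g.app_smul, N.add_smulₓ] }⟩

instance {P : C} {M N : GradedModule P} : Neg (GHom M N) :=
  ⟨fun f =>
    { app := fun n => -(f.app n)
      app_smul := fun {n k l} h m a => by
        show -(f.app l _) = N.smul h (-(f.app n m)) a
        rw [f.app_smul]
        exact (map_neg (N.smulAddHom h a) _).symm }⟩

@[simp] theorem GHom.add_app {P : C} {M N : GradedModule P} (f g : GHom M N) (n : ℤ)
    (x : M.M n) : (f + g).app n x = f.app n x + g.app n x := rfl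

@[simp] theorem GHom.neg_app {P : C} {M N : GradedModule P} (f : GHom M N) (n : ℤ)
    (x : M.M n) : (-f).app n x = -(f.app n x) := rfl

instance {P : C} {M N : GradedModule P} : AddCommGroup (GHom M N) where
  add := (· + ·)
  zero := 0
  neg := Neg.neg
  add_assoc f g h := by ext n x; simp [add_assoc]
  zero_add f := by ext n x; simp
  add_zero f := by ext n x; simp
  add_comm f g := by ext n x; simp [add_comm]
  neg_add_cancel f := by ext n x; simp
  nsmul := nsmulRec
  zsmul := zsmulRec

/-- A projective resolution `⋯ → F₂ → F₁ → F₀ → B → 0` of a graded right `Λ`-module. -/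
structure ProjResolution {P : C} (B : GradedModule P) where
  F : ℕ → GradedModule P
  d : ∀ i : ℕ, GHom (F (i + 1)) (F i)
  aug : GHom (F 0) B
  projective : ∀ i, IsProjective (F i)
  aug_surjective : ∀ n : ℤ, Function.Surjective (aug.app n)
  exact_aug : ∀ (n : ℤ) (x : (F 0).M n), aug.app n x = 0 ↔ x ∈ Set.range ((d 0).app n)
  exact_d : ∀ (i : ℕ) (n : ℤ) (x : (F (i + 1)).M n),
    (d i).app n x = 0 ↔ x ∈ Set.range ((d (i + 1)).app n)

/-- The differential of the cochain complex `Hom_Λ(F_•, Z)` obtained by applying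
`Hom_Λ(−, Z)` to a projective resolution `F_•`. -/
def cochainD {P : C} {B : GradedModule P} (R : ProjResolution B) (Z : GradedModule P)
    (i : ℕ) : GHom (R.F i) Z →+ GHom (R.F (i + 1)) Z :=
  AddMonoidHom.mk' (fun f => f.comp (R.d i)) (fun f g => by ext n x; rfl)

/-- `Ext^{j+1}_Λ(B, Z)`, computed as the `(j+1)`-st cohomology
`ker(Hom(F_{j+1}, Z) → Hom(F_{j+2}, Z)) / im(Hom(F_j, Z) → Hom(F_{j+1}, Z))`
of the complex `Hom_Λ(F_•, Z)` for a projective resolution `F_• → B`. -/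
def extGroup {P : C} {B : GradedModule P} (R : ProjResolution B) (Z : GradedModule P)
    (j : ℕ) : Type v :=
  AddMonoidHom.ker (cochainD R Z (j + 1)) ⧸
    (AddMonoidHom.range (cochainD R Z j)).addSubgroupOf
      (AddMonoidHom.ker (cochainD R Z (j + 1)))

noncomputable instance {P : C} {B : GradedModule P} (R : ProjResolution B)
    (Z : GradedModule P) (j : ℕ) : AddCommGroup (extGroup R Z j) := by
  dsimp [extGroup]; infer_instance

end ExtGroups
section DG

/-- A differential graded right module over `Λ = End_T(P)_*`, where `Λ` is regarded as a
DG ring with zero differential: a graded right `Λ`-module together with a square-zero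
`Λ`-linear differential of degree `-1`. -/
structure DGMod (P : C) where
  gm : GradedModule P
  d : ∀ {n m : ℤ}, m + 1 = n → (gm.M n →+ gm.M m)
  d_sq : ∀ {n m j : ℤ} (h : m + 1 = n) (h' : j + 1 = m) (x : gm.M n), d h' (d h x) = 0
  d_smul : ∀ {n m j l l' : ℤ} (h : m + 1 = n) (hl : n + j = l) (hl' : l' + 1 = l)
    (hm : m + j = l') (x : gm.M n) (a : lam P j),
    d hl' (gm.smul hl x a) = gm.smul hm (d h x) a

/-- A morphism of DG `Λ`-modules: a morphism of the underlying graded modules commuting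
with the differentials. -/
structure DGHom {P : C} (M N : DGMod P) where
  g : GHom M.gm N.gm
  comm : ∀ {n m : ℤ} (h : m + 1 = n) (x : M.gm.M n),
    g.app m (M.d h x) = N.d h (g.app n x)

@[ext] theorem DGHom.ext {P : C} {M N : DGMod P} {f f' : DGHom M N}
    (h : ∀ (n : ℤ) (x : M.gm.M n), f.g.app n x = f'.g.app n x) : f = f' := by
  obtain ⟨fg, _⟩ := f; obtain ⟨fg', _⟩ := f'
  congr 1
  exact GHom.ext h

/-- The category of differential graded right `Λ`-modules. -/
instance dgModCategory (P : C) : Category (DGMod P) where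
  Hom M N := DGHom M N
  id M := ⟨GHom.id _, fun _ _ => rfl⟩
  comp f g := ⟨g.g.comp f.g, fun h x => by
    show g.g.app _ (f.g.app _ _) = _
    rw [f.comm, g.comm]
    rfl⟩
  id_comp f := by apply DGHom.ext; intros; rfl
  comp_id f := by apply DGHom.ext; intros; rfl
  assoc f g h := by apply DGHom.ext; intros; rfl

/-- The cycles `ker dₙ` of a DG module in degree `n`. -/
abbrev cycles {P : C} (M : DGMod P) (n : ℤ) : AddSubgroup (M.gm.M n) :=
  AddMonoidHom.ker (M.d (n := n) (m := n - 1) (by omega))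

/-- The boundaries `im d_{n+1}` of a DG module in degree `n`. -/
abbrev boundaries {P : C} (M : DGMod P) (n : ℤ) : AddSubgroup (M.gm.M n) :=
  AddMonoidHom.range (M.d (n := n + 1) (m := n) rfl)

/-- The homology `H_n M = ker dₙ / im d_{n+1}` of a DG module. -/
abbrev dgHomology {P : C} (M : DGMod P) (n : ℤ) : Type v :=
  cycles M n ⧸ (boundaries M n).addSubgroupOf (cycles M n)

/-- The map induced on cycles by a morphism of DG modules. -/
def cyclesMap {P : C} {M N : DGMod P} (f : M ⟶ N) (n : ℤ) : cycles M n →+ cycles N n :=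
  AddMonoidHom.codRestrict ((f.g.app n).comp (cycles M n).subtype) _ (fun x => by
    have hx : M.d (show (n - 1) + 1 = n by omega) x.1 = 0 := x.2
    have : N.d (show (n - 1) + 1 = n by omega) (f.g.app n x.1) = 0 := by
      rw [← f.comm (show (n - 1) + 1 = n by omega), hx, map_zero]
    exact this)

/-- The map induced on homology by a morphism of DG modules. -/
def dgHomologyMap {P : C} {M N : DGMod P} (f : M ⟶ N) (n : ℤ) :
    dgHomology M n →+ dgHomology N n :=
  QuotientAddGroup.map _ _ (cyclesMap f n) (by
    intro x hx
    have hx' : x.1 ∈ boundaries M n := hx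
    obtain ⟨y, hy⟩ := AddMonoidHom.mem_range.mp hx'
    have : (f.g.app n x.1) ∈ boundaries N n := by
      refine AddMonoidHom.mem_range.mpr ⟨f.g.app (n + 1) y, ?_⟩
      rw [← f.comm rfl y, hy]
    exact this)

/-- A quasi-isomorphism of DG modules: a morphism inducing an isomorphism on homology. -/
def quasiIso (P : C) : MorphismProperty (DGMod P) :=
  fun _ _ f => ∀ n : ℤ, Function.Bijective (dgHomologyMap f n)

/-- The derived category `D(Λ)` of the graded endomorphism ring `Λ = End_T(P)_*`
(regarded as a DG ring with zero differential): the localization of the category of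
DG right `Λ`-modules at the quasi-isomorphisms. -/
abbrev DerivedCat (P : C) := (quasiIso P).Localization

end DG


/-! ### Auxiliary infrastructure -/

section Infra

attribute [local instance] Classical.propDecidable

variable {C : Type u} [Category.{v} C] [Preadditive C] [HasZeroObject C]
  [HasShift C ℤ] [∀ n : ℤ, (shiftFunctor C n).Additive] [Pretriangulated C]

@[simp] theorem piGHom_app (P : C) {X Y : C} (f : X ⟶ Y) (n : ℤ) (u : P⟦n⟧ ⟶ X) :
    (piGHom P f).app n u = u ≫ f := rfl

@[simp] theorem GHom.comp_app {P : C} {M N K : GradedModule P} (g : GHom N K) (f : GHom M N)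
    (n : ℤ) (x : M.M n) : (g.comp f).app n x = g.app n (f.app n x) := rfl

@[simp] theorem GHom.id_app {P : C} {M : GradedModule P} (n : ℤ) (x : M.M n) :
    (GHom.id M).app n x = x := rfl

theorem piGHom_comp (P : C) {X Y Z : C} (f : X ⟶ Y) (g : Y ⟶ Z) :
    piGHom P (f ≫ g) = (piGHom P g).comp (piGHom P f) := by
  apply GHom.ext; intro n x
  show x ≫ (f ≫ g) = (x ≫ f) ≫ g
  rw [Category.assoc]

theorem piGHom_sub (P : C) {X Y : C} (f g : X ⟶ Y) :
    piGHom P (f - g) = piGHom P f + piGHom P (-g) := by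
  apply GHom.ext; intro n x
  show x ≫ (f - g) = x ≫ f + x ≫ (-g)
  simp [Preadditive.comp_sub, sub_eq_add_neg]

/-- The shift isomorphism on graded homs: `Hom(P⟦n⟧, Y) ≃+ Hom(P⟦m⟧, Y⟦a⟧)` when `n + a = m`. -/
noncomputable def shiftHomEquiv (P : C) (a n m : ℤ) (h : n + a = m) (Y : C) :
    (P⟦n⟧ ⟶ Y) ≃+ (P⟦m⟧ ⟶ Y⟦a⟧) where
  toFun u := (shiftFunctorAdd' C n a m h).hom.app P ≫ u⟦a⟧'
  invFun v := (shiftFunctor C a).preimage ((shiftFunctorAdd' C n a m h).inv.app P ≫ v)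
  left_inv u := by
    apply (shiftFunctor C a).map_injective
    simp [Functor.map_preimage]
  right_inv v := by
    simp [Functor.map_preimage]
  map_add' u v := by
    simp [Functor.map_add, Preadditive.comp_add]

theorem shiftHomEquiv_natural (P : C) (a n m : ℤ) (h : n + a = m) {Y Z : C}
    (u : P⟦n⟧ ⟶ Y) (f : Y ⟶ Z) :
    shiftHomEquiv P a n m h Z (u ≫ f) = shiftHomEquiv P a n m h Y u ≫ f⟦a⟧' := by
  simp [shiftHomEquiv, Functor.map_comp]

theorem shiftHomEquiv_smul (P : C) (a : ℤ) {n m k l l' : ℤ} (h : n + a = m)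
    (h' : l + a = l') (h₁ : n + k = l) (h₂ : m + k = l') (Y : C)
    (u : P⟦n⟧ ⟶ Y) (b : lam P k) :
    shiftHomEquiv P a l l' h' Y ((piMod P Y).smul h₁ u b) =
      (piMod P (Y⟦a⟧)).smul h₂ (shiftHomEquiv P a n m h Y u) b := by
  show (shiftFunctorAdd' C l a l' h').hom.app P ≫ (gsmulHom P h₁ u b)⟦a⟧' =
    gsmulHom P h₂ ((shiftFunctorAdd' C n a m h).hom.app P ≫ u⟦a⟧') b
  simp only [gsmulHom, Functor.map_comp, Category.assoc]
  have nat := (shiftFunctorAdd' C n a m h).hom.naturality b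
  dsimp at nat
  rw [reassoc_of% nat]
  rw [← shiftFunctorAdd'_assoc_hom_app_assoc k n a l m l' (by omega) (by omega) (by omega) P]

end Infra

section Infra2

attribute [local instance] Classical.propDecidable

variable {C : Type u} [Category.{v} C] [Preadditive C] [HasZeroObject C]
  [HasShift C ℤ] [∀ n : ℤ, (shiftFunctor C n).Additive] [Pretriangulated C]
  [HasCoproducts.{v} C]

/-- `Hom(P⟦0⟧, W) ≃+ Hom(P, W)`. -/
noncomputable def zeroHomEquiv (P W : C) : (P⟦(0:ℤ)⟧ ⟶ W) ≃+ (P ⟶ W) where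
  toFun u := (shiftFunctorZero C ℤ).inv.app P ≫ u
  invFun v := (shiftFunctorZero C ℤ).hom.app P ≫ v
  left_inv u := by simp
  right_inv v := by simp
  map_add' u v := by simp [Preadditive.comp_add]

/-- `Hom(P⟦n⟧, Z) ≃+ Hom(P, Z⟦-n⟧)`. -/
noncomputable def downEquiv (P : C) (n : ℤ) (Z : C) : (P⟦n⟧ ⟶ Z) ≃+ (P ⟶ Z⟦(-n : ℤ)⟧) :=
  (shiftHomEquiv P (-n) n 0 (by omega) Z).trans (zeroHomEquiv P (Z⟦(-n:ℤ)⟧))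

theorem downEquiv_natural (P : C) (n : ℤ) {Z W : C} (u : P⟦n⟧ ⟶ Z) (f : Z ⟶ W) :
    downEquiv P n W (u ≫ f) = downEquiv P n Z u ≫ f⟦(-n : ℤ)⟧' := by
  simp [downEquiv, zeroHomEquiv, shiftHomEquiv_natural, Category.assoc]

/-- The comparison map `⊕ᵢ Hom(P⟦n⟧, Yᵢ) →+ Hom(P⟦n⟧, ∐ᵢ Yᵢ)`. -/
noncomputable def compShift (P : C) (n : ℤ) {ι : Type v} (Y : ι → C) :
    (⨁ i, (P⟦n⟧ ⟶ Y i)) →+ (P⟦n⟧ ⟶ ∐ Y) :=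
  DirectSum.toAddMonoid fun i =>
    AddMonoidHom.mk' (fun f => f ≫ Sigma.ι Y i) (fun f g => Preadditive.add_comp _ _ _ _ _ _)

@[simp] theorem compShift_of (P : C) (n : ℤ) {ι : Type v} (Y : ι → C) (i : ι)
    (u : P⟦n⟧ ⟶ Y i) : compShift P n Y (DirectSum.of _ i u) = u ≫ Sigma.ι Y i := by
  simp [compShift]

theorem compShift_mem (P : C) (n : ℤ) {ι : Type v} (Y : ι → C)
    (S : AddSubgroup (P⟦n⟧ ⟶ ∐ Y)) (hS : ∀ (i : ι) (u : P⟦n⟧ ⟶ Y i), u ≫ Sigma.ι Y i ∈ S)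
    (x : ⨁ i, (P⟦n⟧ ⟶ Y i)) : compShift P n Y x ∈ S := by
  induction x using DirectSum.induction_on with
  | zero => rw [map_zero]; exact S.zero_mem
  | of i u => rw [compShift_of]; exact hS i u
  | add a b ha hb => rw [map_add]; exact S.add_mem ha hb

theorem compShift_surjective (P : C) (hcpt : IsCompactObj P) (n : ℤ)
    {ι : Type v} (Y : ι → C) : Function.Surjective (compShift P n Y) := by
  intro v
  set G := shiftFunctor C (-n) with hG
  have key : ∀ y : ⨁ i, (P ⟶ (Y i)⟦(-n:ℤ)⟧), ∃ x : ⨁ i, (P⟦n⟧ ⟶ Y i),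
      downEquiv P n (∐ Y) (compShift P n Y x) =
        compactComparison P (fun i => (Y i)⟦(-n:ℤ)⟧) y ≫ sigmaComparison G Y := by
    intro y
    induction y using DirectSum.induction_on with
    | zero => exact ⟨0, by simp⟩
    | of i t =>
        refine ⟨DirectSum.of _ i ((downEquiv P n (Y i)).symm t), ?_⟩
        rw [compShift_of]
        rw [downEquiv_natural]
        simp [compactComparison]
        rw [ι_comp_sigmaComparison]
    | add a b ha hb =>
        obtain ⟨x₁, h₁⟩ := ha
        obtain ⟨x₂, h₂⟩ := hb
        exact ⟨x₁ + x₂, by simp [map_add, h₁, h₂, Preadditive.add_comp]⟩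
  obtain ⟨y, hy⟩ := (hcpt ι (fun i => (Y i)⟦(-n:ℤ)⟧)).2
    (downEquiv P n (∐ Y) v ≫ inv (sigmaComparison G Y))
  obtain ⟨x, hx⟩ := key y
  refine ⟨x, (downEquiv P n (∐ Y)).injective ?_⟩
  rw [hx, hy, Category.assoc, IsIso.inv_hom_id, Category.comp_id]

end Infra2

section Infra3

attribute [local instance] Classical.propDecidable

variable {C : Type u} [Category.{v} C] [Preadditive C] [HasZeroObject C]
  [HasShift C ℤ] [∀ n : ℤ, (shiftFunctor C n).Additive] [Pretriangulated C]
  [HasCoproducts.{v} C]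

theorem shiftHomEquiv_comp (P : C) (a k m : ℤ) (h : k + a = m) {Z : C}
    (w : P⟦a⟧ ⟶ Z) (b : lam P k) :
    shiftHomEquiv P a k m h P b ≫ w = (piMod P Z).smul (by omega : a + k = m) w b := by
  show ((shiftFunctorAdd' C k a m h).hom.app P ≫ b⟦a⟧') ≫ w =
    (shiftFunctorAdd' C k a m (by omega)).hom.app P ≫ b⟦a⟧' ≫ w
  rw [Category.assoc]

/-- Comparison bijectivity for "free" objects `∐ᵢ P⟦dᵢ⟧`. -/
theorem free_comparison (P : C) (hcpt : IsCompactObj P) {ι : Type v} (d : ι → ℤ) (Z : C) :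
    Function.Bijective (fun f : (∐ fun i => P⟦d i⟧) ⟶ Z => piGHom P f) := by
  constructor
  · intro f f' hff
    apply Sigma.hom_ext
    intro i
    have := congrArg (fun φ => GHom.app φ (d i) (Sigma.ι (fun i => P⟦d i⟧) i)) hff
    exact this
  · intro φ
    refine ⟨Sigma.desc (fun i => φ.app (d i) (Sigma.ι (fun i => P⟦d i⟧) i)), ?_⟩
    apply GHom.ext; intro n u
    obtain ⟨x, rfl⟩ := compShift_surjective P hcpt n _ u
    induction x using DirectSum.induction_on with
    | zero => simp
    | of i v =>
        rw [compShift_of]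
        have hb := AddEquiv.apply_symm_apply (shiftHomEquiv P (d i) (n - d i) n (by omega) P) v
        rw [← hb, shiftHomEquiv_comp]
        show (piGHom P _).app n _ = _
        rw [(piGHom P _).app_smul, φ.app_smul]
        congr 1
        show Sigma.ι (fun i => P⟦d i⟧) i ≫
          Sigma.desc (fun i => φ.app (d i) (Sigma.ι (fun i => P⟦d i⟧) i)) = _
        simp
    | add a b ha hb =>
        simp only [map_add, ha, hb]

/-- Comparison bijectivity transports along isomorphisms in `C`. -/
theorem comparison_transport (P : C) {B B' : C} (e : B ≅ B')
    (hB : ∀ Z : C, Function.Bijective (fun f : B ⟶ Z => piGHom P f)) (Z : C) :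
    Function.Bijective (fun f : B' ⟶ Z => piGHom P f) := by
  constructor
  · intro f f' hff
    have h2 : piGHom P (e.hom ≫ f) = piGHom P (e.hom ≫ f') := by
      apply GHom.ext; intro n u
      show u ≫ e.hom ≫ f = u ≫ e.hom ≫ f'
      rw [← Category.assoc, ← Category.assoc]
      exact congrArg (fun φ => GHom.app φ n (u ≫ e.hom)) hff
    have := (hB Z).1 h2
    rwa [cancel_epi e.hom] at this
  · intro φ
    obtain ⟨g, hg⟩ := (hB Z).2 (φ.comp (piGHom P e.hom))
    refine ⟨e.inv ≫ g, ?_⟩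
    apply GHom.ext; intro n u
    show u ≫ e.inv ≫ g = φ.app n u
    have := congrArg (fun ψ => GHom.app ψ n (u ≫ e.inv)) hg
    have h3 : (u ≫ e.inv) ≫ g = φ.app n ((u ≫ e.inv) ≫ e.hom) := this
    rw [← Category.assoc, h3, Category.assoc, e.inv_hom_id, Category.comp_id]

end Infra3

section Infra4

variable {C : Type u} [Category.{v} C] [Preadditive C] [HasZeroObject C]
  [HasShift C ℤ] [∀ n : ℤ, (shiftFunctor C n).Additive] [Pretriangulated C]

/-- Transport along an equality of degrees. -/
def GradedModule.mcast {P : C} (M : GradedModule P) {n m : ℤ} (h : n = m) :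
    M.M n →+ M.M m := by subst h; exact AddMonoidHom.id _

@[simp] theorem GradedModule.mcast_rfl {P : C} (M : GradedModule P) {n : ℤ} (x : M.M n) :
    M.mcast rfl x = x := rfl

theorem GradedModule.mcast_smul {P : C} (M : GradedModule P) {n k l l' : ℤ} (h : l = l')
    (hnk : n + k = l) (hnk' : n + k = l') (x : M.M n) (a : lam P k) :
    M.mcast h (M.smul hnk x a) = M.smul hnk' x a := by subst h; rfl

theorem GradedModule.smul_mcast {P : C} (M : GradedModule P) {n n' k l : ℤ} (h : n = n')
    (hnk : n + k = l) (hnk' : n' + k = l) (x : M.M n) (a : lam P k) :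
    M.smul hnk' (M.mcast h x) a = M.smul hnk x a := by subst h; rfl

theorem GradedModule.sub_smulₓ {P : C} (M : GradedModule P) {n k l : ℤ} (h : n + k = l)
    (x y : M.M n) (a : lam P k) :
    M.smul h (x - y) a = M.smul h x a - M.smul h y a :=
  map_sub (M.smulAddHom h a) x y

theorem GHom.app_mcast {P : C} {M N : GradedModule P} (f : GHom M N) {n m : ℤ} (h : n = m)
    (x : M.M n) : f.app m (M.mcast h x) = N.mcast h (f.app n x) := by subst h; rfl

theorem shiftHomEquiv_mcast (P : C) (a : ℤ) {n m m' : ℤ} (hm : n + a = m) (hm' : n + a = m')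
    (h : m' = m) (Y : C) (u : P⟦n⟧ ⟶ Y) :
    (piMod P (Y⟦a⟧)).mcast h (shiftHomEquiv P a n m' hm' Y u) =
      shiftHomEquiv P a n m hm Y u := by subst h; rfl

/-- Reindexing a graded module: `(reindex c M)ₙ = M_{n+c}`. -/
def reindex {P : C} (c : ℤ) (M : GradedModule P) : GradedModule P where
  M n := M.M (n + c)
  smul {n k l} h m a := M.smul (by omega : (n + c) + k = l + c) m a
  smul_addₓ h m a b := M.smul_addₓ _ m a b
  add_smulₓ h m m' a := M.add_smulₓ _ m m' a
  smul_oneₓ m := M.smul_oneₓ m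
  smul_mulₓ h₁ h₂ h₃ h₄ m a b := M.smul_mulₓ _ h₂ _ _ m a b

/-- Reindexing a morphism of graded modules. -/
def reindexMap {P : C} (c : ℤ) {M N : GradedModule P} (f : GHom M N) :
    GHom (reindex c M) (reindex c N) where
  app n := f.app (n + c)
  app_smul h m a := f.app_smul _ m a

/-- The inverse of a degreewise bijective morphism of graded modules. -/
noncomputable def GHom.inverse {P : C} {M N : GradedModule P} (f : GHom M N)
    (hf : ∀ n, Function.Bijective (f.app n)) : GHom N M where
  app n := AddMonoidHom.mk' (fun y => (Equiv.ofBijective _ (hf n)).symm y) (by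
    intro y y'
    apply (hf n).1
    show f.app n _ = f.app n (_ + _)
    rw [map_add (f.app n)]
    rw [Equiv.ofBijective_apply_symm_apply _ (hf n), Equiv.ofBijective_apply_symm_apply _ (hf n),
      Equiv.ofBijective_apply_symm_apply _ (hf n)])
  app_smul {n k l} h y a := by
    apply (hf l).1
    show f.app l ((Equiv.ofBijective _ (hf l)).symm (N.smul h y a)) =
      f.app l (M.smul h ((Equiv.ofBijective _ (hf n)).symm y) a)
    rw [Equiv.ofBijective_apply_symm_apply _ (hf l), f.app_smul,
      Equiv.ofBijective_apply_symm_apply _ (hf n)]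

theorem GHom.inverse_comp {P : C} {M N : GradedModule P} (f : GHom M N)
    (hf : ∀ n, Function.Bijective (f.app n)) :
    (f.inverse hf).comp f = GHom.id M := by
  apply GHom.ext; intro n x
  apply (hf n).1
  show f.app n ((Equiv.ofBijective _ (hf n)).symm (f.app n x)) = f.app n x
  rw [Equiv.ofBijective_apply_symm_apply _ (hf n)]

theorem GHom.comp_inverse {P : C} {M N : GradedModule P} (f : GHom M N)
    (hf : ∀ n, Function.Bijective (f.app n)) :
    f.comp (f.inverse hf) = GHom.id N := by
  apply GHom.ext; intro n y
  show f.app n ((Equiv.ofBijective _ (hf n)).symm y) = y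
  rw [Equiv.ofBijective_apply_symm_apply _ (hf n)]

/-- Projectivity transports backwards along degreewise bijective morphisms. -/
theorem isProjective_of_bijective_to {P : C} {M N : GradedModule P} (f : GHom M N)
    (hf : ∀ n, Function.Bijective (f.app n)) (hN : IsProjective N) : IsProjective M := by
  intro A B e he φ
  obtain ⟨g, hg⟩ := hN A B e he (φ.comp (f.inverse hf))
  refine ⟨g.comp f, ?_⟩
  apply GHom.ext; intro n x
  have := congrArg (fun ψ => GHom.app ψ n (f.app n x)) hg
  simp only [GHom.comp_app] at this ⊢
  rw [this]
  show φ.app n ((Equiv.ofBijective _ (hf n)).symm (f.app n x)) = _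
  congr 1
  exact (Equiv.ofBijective _ (hf n)).symm_apply_apply x

end Infra4

section Infra5

variable {C : Type u} [Category.{v} C] [Preadditive C] [HasZeroObject C]
  [HasShift C ℤ] [∀ n : ℤ, (shiftFunctor C n).Additive] [Pretriangulated C]

/-- Projectivity of `π_* Y` implies projectivity of `π_*(ΣY)`. -/
theorem isProjective_shift (P : C) {Y : C} (hp : IsProjective (piMod P Y)) :
    IsProjective (piMod P (Y⟦(1:ℤ)⟧)) := by
  intro A B e he f
  let f' : GHom (piMod P Y) (reindex 1 B) :=
    { app := fun n => (f.app (n+1)).comp (shiftHomEquiv P 1 n (n+1) rfl Y).toAddMonoidHom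
      app_smul := by
        intro n k l h m a
        show f.app (l+1) (shiftHomEquiv P 1 l (l+1) rfl Y ((piMod P Y).smul h m a)) = _
        rw [shiftHomEquiv_smul P 1 (rfl : n + 1 = n + 1) (rfl : l + 1 = l + 1) h
          (by omega : (n+1) + k = l + 1) Y m a]
        exact f.app_smul _ _ a }
  obtain ⟨g, hg⟩ := hp (reindex 1 A) (reindex 1 B) (reindexMap 1 e) (fun n => he (n+1)) f'
  have key : ∀ {n m : ℤ} (h : n + 1 = m) (u : P⟦m⟧ ⟶ Y⟦(1:ℤ)⟧) {k l l' : ℤ}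
      (hk : m + k = l) (hl : l' + 1 = l) (hk' : n + k = l') (a : lam P k),
      (shiftHomEquiv P 1 l' l (by omega) Y).symm ((piMod P (Y⟦(1:ℤ)⟧)).smul hk u a) =
        (piMod P Y).smul hk' ((shiftHomEquiv P 1 n m h Y).symm u) a := by
    intro n m h u k l l' hk hl hk' a
    apply (shiftHomEquiv P 1 l' l (by omega) Y).injective
    rw [AddEquiv.apply_symm_apply]
    rw [shiftHomEquiv_smul P 1 h (by omega : l' + 1 = l) hk' hk Y _ a]
    rw [AddEquiv.apply_symm_apply]
  refine ⟨GHom.mk (fun m => (A.mcast (by omega : m - 1 + 1 = m)).comp ((g.app (m-1)).comp (shiftHomEquiv P 1 (m-1) m (by omega) Y).symm.toAddMonoidHom)) ?_, ?_⟩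
  · intro n k l h u a
    show A.mcast (by omega) (g.app (l-1)
        ((shiftHomEquiv P 1 (l-1) l (by omega) Y).symm ((piMod P (Y⟦(1:ℤ)⟧)).smul h u a))) =
      A.smul h (A.mcast (by omega) (g.app (n-1)
        ((shiftHomEquiv P 1 (n-1) n (by omega) Y).symm u))) a
    rw [key (by omega : (n-1) + 1 = n) u h (by omega : (l-1) + 1 = l)
      (by omega : (n-1) + k = l-1) a]
    rw [g.app_smul (by omega : (n-1) + k = l-1)]
    show A.mcast (by omega) (A.smul (by omega) _ a) = _
    erw [A.mcast_smul (by omega : l - 1 + 1 = l) (by omega : (n-1+1) + k = l - 1 + 1)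
      (by omega : (n-1+1) + k = l)]
    erw [A.smul_mcast (by omega : n - 1 + 1 = n) (by omega : (n-1+1) + k = l) h]
  · apply GHom.ext; intro m u
    show e.app m (A.mcast (by omega) (g.app (m-1)
        ((shiftHomEquiv P 1 (m-1) m (by omega) Y).symm u))) = f.app m u
    erw [e.app_mcast (by omega : m - 1 + 1 = m)]
    have h1 : e.app (m-1+1) (g.app (m-1) ((shiftHomEquiv P 1 (m-1) m (by omega) Y).symm u)) =
        f'.app (m-1) ((shiftHomEquiv P 1 (m-1) m (by omega) Y).symm u) := by
      exact congrArg (fun ψ => GHom.app ψ (m-1)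
        ((shiftHomEquiv P 1 (m-1) m (by omega) Y).symm u)) hg
    rw [h1]
    show B.mcast (by omega : m - 1 + 1 = m) (f.app (m-1+1) (shiftHomEquiv P 1 (m-1) (m-1+1) rfl Y
      ((shiftHomEquiv P 1 (m-1) m (by omega) Y).symm u))) = f.app m u
    rw [← f.app_mcast (by omega : m - 1 + 1 = m)]
    rw [shiftHomEquiv_mcast P 1 (by omega : (m-1) + 1 = m) rfl (by omega : m - 1 + 1 = m) Y]
    rw [AddEquiv.apply_symm_apply]
end Infra5

section Infra6

variable {C : Type u} [Category.{v} C] [Preadditive C] [HasZeroObject C]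
  [HasShift C ℤ] [∀ n : ℤ, (shiftFunctor C n).Additive] [Pretriangulated C]
  [HasCoproducts.{v} C]

/-- The main abstract step: if `A → A → Cc → ΣA` is a distinguished triangle with `A`
free, the first map is `π_*`-injective, and `π_* Cc` is projective, then the comparison
map is bijective for `Cc`. -/
theorem telescope_comparison (P : C) (hcpt : IsCompactObj P) {ι : Type v} (d : ι → ℤ)
    {Cc : C} (m₁ : (∐ fun i => P⟦d i⟧) ⟶ (∐ fun i => P⟦d i⟧))
    (p : (∐ fun i => P⟦d i⟧) ⟶ Cc) (δ : Cc ⟶ (∐ fun i => P⟦d i⟧)⟦(1:ℤ)⟧)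
    (hT : Triangle.mk m₁ p δ ∈ distTriang C)
    (hm₁ : ∀ (n : ℤ) (z : P⟦n⟧ ⟶ (∐ fun i => P⟦d i⟧)), z ≫ m₁ = 0 → z = 0)
    (hprojC : IsProjective (piMod P Cc)) (Z : C) :
    Function.Bijective (fun f : Cc ⟶ Z => piGHom P f) := by
  let A := ∐ fun i => P⟦d i⟧
  have hfreeA : ∀ W : C, Function.Bijective (fun f : A ⟶ W => piGHom P f) :=
    free_comparison P hcpt d
  have e1 : (∐ fun i => P⟦d i + 1⟧) ≅ A⟦(1:ℤ)⟧ := by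
    refine ?_ ≪≫ asIso (sigmaComparison (shiftFunctor C (1:ℤ)) (fun i => P⟦d i⟧))
    exact HasColimit.isoOfNatIso (Discrete.natIso (fun i =>
      (shiftFunctorAdd' C (d i.as) 1 (d i.as + 1) rfl).app P))
  have hfreeSA : ∀ W : C, Function.Bijective (fun f : A⟦(1:ℤ)⟧ ⟶ W => piGHom P f) :=
    fun W => comparison_transport P e1 (free_comparison P hcpt (fun i => d i + 1)) W
  -- injectivity of π_* of the shifted first map
  have hm₁s : ∀ (m : ℤ) (v : P⟦m⟧ ⟶ A⟦(1:ℤ)⟧), v ≫ m₁⟦(1:ℤ)⟧' = 0 → v = 0 := by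
    intro m v hv
    have h0 : (shiftHomEquiv P 1 (m-1) m (by omega) A).symm v ≫ m₁ = 0 := by
      apply (shiftHomEquiv P 1 (m-1) m (by omega) A).injective
      rw [shiftHomEquiv_natural, AddEquiv.apply_symm_apply, hv, map_zero]
    have h1 := hm₁ (m-1) _ h0
    have := (shiftHomEquiv P 1 (m-1) m (by omega) A).apply_symm_apply v
    rw [← this, h1, map_zero]
  have hm₁'inj : ∀ (m : ℤ) (v : P⟦m⟧ ⟶ A⟦(1:ℤ)⟧), v ≫ (-(m₁⟦(1:ℤ)⟧')) = 0 → v = 0 := by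
    intro m v hv
    rw [Preadditive.comp_neg, neg_eq_zero] at hv
    exact hm₁s m v hv
  -- π_* p is (degreewise) surjective
  have hpepi : ∀ (n : ℤ) (y : P⟦n⟧ ⟶ Cc), ∃ z : P⟦n⟧ ⟶ A, z ≫ p = y := by
    intro n y
    have hyd : y ≫ δ = 0 := by
      apply hm₁s
      have h31 : δ ≫ m₁⟦(1:ℤ)⟧' = 0 := comp_distTriang_mor_zero₃₁ _ hT
      rw [Category.assoc, h31, comp_zero]
    obtain ⟨z, hz⟩ := Triangle.coyoneda_exact₃ _ hT y hyd
    exact ⟨z, hz.symm⟩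
  have hT2 := rot_of_distTriang _ (rot_of_distTriang _ hT)
  have hT3 := rot_of_distTriang _ hT2
  constructor
  · -- injectivity; first the zero case
    have hzero : ∀ f : Cc ⟶ Z, piGHom P f = 0 → f = 0 := by
      intro f hf0
      have hpf : p ≫ f = 0 := by
        apply Sigma.hom_ext
        intro i
        have h4 : (Sigma.ι (fun i => P⟦d i⟧) i ≫ p) ≫ f = 0 :=
          congrArg (fun ψ => GHom.app ψ (d i) (Sigma.ι (fun i => P⟦d i⟧) i ≫ p)) hf0
        rw [← Category.assoc, h4, comp_zero]
      obtain ⟨t, ht⟩ : ∃ t : (∐ fun i => P⟦d i⟧)⟦(1:ℤ)⟧ ⟶ Z, f = δ ≫ t := Triangle.yoneda_exact₃ _ hT f hpf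
      -- build σ₃ and the retraction r
      have hm2epi : ∀ m : ℤ, Function.Surjective ((piGHom P (-(p⟦(1:ℤ)⟧'))).app m) := by
        intro m y'
        obtain ⟨z, hz⟩ := hpepi (m-1) ((shiftHomEquiv P 1 (m-1) m (by omega) Cc).symm y')
        refine ⟨-(shiftHomEquiv P 1 (m-1) m (by omega) A z), ?_⟩
        show (-(shiftHomEquiv P 1 (m-1) m (by omega) A z)) ≫ (-(p⟦(1:ℤ)⟧')) = y'
        rw [Preadditive.neg_comp, Preadditive.comp_neg, neg_neg, ← shiftHomEquiv_natural, hz,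
          AddEquiv.apply_symm_apply]
      obtain ⟨σ₃, hσ₃⟩ := isProjective_shift P hprojC (piMod P (A⟦(1:ℤ)⟧))
        (piMod P (Cc⟦(1:ℤ)⟧)) (piGHom P (-(p⟦(1:ℤ)⟧'))) hm2epi (GHom.id _)
      have hσ₃' : ∀ (m : ℤ) (y : P⟦m⟧ ⟶ Cc⟦(1:ℤ)⟧), σ₃.app m y ≫ (-(p⟦(1:ℤ)⟧')) = y := by
        intro m y
        exact congrArg (fun ψ => GHom.app ψ m y) hσ₃
      -- uniqueness helper
      have huniq : ∀ (m : ℤ) (y y' : P⟦m⟧ ⟶ A⟦(1:ℤ)⟧),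
          y ≫ (-(m₁⟦(1:ℤ)⟧')) = y' ≫ (-(m₁⟦(1:ℤ)⟧')) → y = y' := by
        intro m y y' hyy
        have : (y - y') ≫ (-(m₁⟦(1:ℤ)⟧')) = 0 := by
          rw [Preadditive.sub_comp, hyy, sub_self]
        have := hm₁'inj m _ this
        rwa [sub_eq_zero] at this
      -- the retraction
      have spec : ∀ (m : ℤ) (x : P⟦m⟧ ⟶ A⟦(1:ℤ)⟧), ∃ y : P⟦m⟧ ⟶ A⟦(1:ℤ)⟧,
          x - σ₃.app m (x ≫ (-(p⟦(1:ℤ)⟧'))) = y ≫ (-(m₁⟦(1:ℤ)⟧')) := by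
        intro m x
        apply Triangle.coyoneda_exact₂ _ hT3
        show (x - σ₃.app m (x ≫ (-(p⟦(1:ℤ)⟧')))) ≫ (-(p⟦(1:ℤ)⟧')) = 0
        rw [Preadditive.sub_comp, hσ₃' m (x ≫ (-(p⟦(1:ℤ)⟧'))), sub_self]
      set rf : ∀ m : ℤ, (P⟦m⟧ ⟶ A⟦(1:ℤ)⟧) → (P⟦m⟧ ⟶ A⟦(1:ℤ)⟧) :=
        fun m x => Classical.choose (spec m x) with hrf
      have hr : ∀ (m : ℤ) (x : P⟦m⟧ ⟶ A⟦(1:ℤ)⟧),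
          rf m x ≫ (-(m₁⟦(1:ℤ)⟧')) = x - σ₃.app m (x ≫ (-(p⟦(1:ℤ)⟧'))) :=
        fun m x => (Classical.choose_spec (spec m x)).symm
      have hradd : ∀ (m : ℤ) (x x' : P⟦m⟧ ⟶ A⟦(1:ℤ)⟧),
          rf m (x + x') = rf m x + rf m x' := by
        intro m x x'
        apply huniq
        conv_rhs => rw [Preadditive.add_comp, hr, hr]
        rw [hr, Preadditive.add_comp, map_add]
        abel
      have hrsmul : ∀ {n k l : ℤ} (h : n + k = l) (x : P⟦n⟧ ⟶ A⟦(1:ℤ)⟧) (a : lam P k),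
          rf l ((piMod P (A⟦(1:ℤ)⟧)).smul h x a) = (piMod P (A⟦(1:ℤ)⟧)).smul h (rf n x) a := by
        intro n k l h x a
        apply huniq
        rw [hr]
        have e2 : ((piMod P (A⟦(1:ℤ)⟧)).smul h (rf n x) a) ≫ (-(m₁⟦(1:ℤ)⟧')) =
            (piMod P (A⟦(1:ℤ)⟧)).smul h (rf n x ≫ (-(m₁⟦(1:ℤ)⟧'))) a :=
          (piGHom P (-(m₁⟦(1:ℤ)⟧'))).app_smul h (rf n x) a
        rw [e2, hr]
        have e3 : ((piMod P (A⟦(1:ℤ)⟧)).smul h x a) ≫ (-(p⟦(1:ℤ)⟧')) =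
            (piMod P (Cc⟦(1:ℤ)⟧)).smul h (x ≫ (-(p⟦(1:ℤ)⟧'))) a :=
          (piGHom P (-(p⟦(1:ℤ)⟧'))).app_smul h x a
        rw [e3, σ₃.app_smul h]
        rw [GradedModule.sub_smulₓ]
      have hrm₁ : ∀ (m : ℤ) (y : P⟦m⟧ ⟶ A⟦(1:ℤ)⟧), rf m (y ≫ (-(m₁⟦(1:ℤ)⟧'))) = y := by
        intro m y
        apply huniq
        rw [hr]
        have h12 : (-(m₁⟦(1:ℤ)⟧')) ≫ (-(p⟦(1:ℤ)⟧')) = 0 := comp_distTriang_mor_zero₁₂ _ hT3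
        rw [Category.assoc, h12, comp_zero, map_zero, sub_zero]
      -- realize (π t) ∘ r and conclude
      obtain ⟨w, hw⟩ := (hfreeSA Z).2 ((piGHom P t).comp
        (GHom.mk (fun m => AddMonoidHom.mk' (rf m) (hradd m)) (fun h x a => hrsmul h x a)))
      have hmw : (-(m₁⟦(1:ℤ)⟧')) ≫ w = t := by
        apply (hfreeSA Z).1
        apply GHom.ext; intro m x
        have h7 : (x ≫ (-(m₁⟦(1:ℤ)⟧'))) ≫ w = rf m (x ≫ (-(m₁⟦(1:ℤ)⟧'))) ≫ t :=
          congrArg (fun ψ => GHom.app ψ m (x ≫ (-(m₁⟦(1:ℤ)⟧')))) hw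
        show x ≫ (-(m₁⟦(1:ℤ)⟧')) ≫ w = x ≫ t
        rw [← Category.assoc, h7, hrm₁]
      have hδm : δ ≫ (-(m₁⟦(1:ℤ)⟧')) = 0 := by
        have : δ ≫ (-(m₁⟦(1:ℤ)⟧')) = 0 := comp_distTriang_mor_zero₁₂ _ hT2
        exact this
      rw [ht, ← hmw, ← Category.assoc, hδm, zero_comp]
    intro f f' hff
    have hsub : piGHom P (f - f') = 0 := by
      apply GHom.ext; intro n x
      show x ≫ (f - f') = 0
      rw [Preadditive.comp_sub]
      have h8 : x ≫ f = x ≫ f' := congrArg (fun ψ => GHom.app ψ n x) hff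
      rw [h8, sub_self]
    have := hzero _ hsub
    rwa [sub_eq_zero] at this
  · -- surjectivity
    intro φ
    obtain ⟨v, hv⟩ := (hfreeA Z).2 (φ.comp (piGHom P p))
    have hmv : m₁ ≫ v = 0 := by
      apply Sigma.hom_ext
      intro i
      have h12 : m₁ ≫ p = 0 := comp_distTriang_mor_zero₁₂ _ hT
      have h5 : (Sigma.ι (fun i => P⟦d i⟧) i ≫ m₁) ≫ v =
          φ.app (d i) ((Sigma.ι (fun i => P⟦d i⟧) i ≫ m₁) ≫ p) :=
        congrArg (fun ψ => GHom.app ψ (d i) (Sigma.ι (fun i => P⟦d i⟧) i ≫ m₁)) hv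
      rw [← Category.assoc, h5]
      simp only [Category.assoc, h12, comp_zero, map_zero]
    obtain ⟨f, hf⟩ : ∃ f : Cc ⟶ Z, v = p ≫ f := Triangle.yoneda_exact₂ _ hT v hmv
    refine ⟨f, ?_⟩
    apply GHom.ext; intro n y
    obtain ⟨z, hz⟩ := hpepi n y
    show y ≫ f = φ.app n y
    rw [← hz, Category.assoc, ← hf]
    exact congrArg (fun ψ => GHom.app ψ n z) hv
end Infra6

section Telescope

variable {C : Type u} [Category.{v} C] [Preadditive C] [HasZeroObject C]
  [HasShift C ℤ] [∀ n : ℤ, (shiftFunctor C n).Additive] [Pretriangulated C]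
  [HasCoproducts.{v} C]

variable (P F : C)

/-- Index type of the canonical free cover of `F`. -/
abbrev covIdx : Type v := Σ n : ℤ, (P⟦n⟧ ⟶ F)

/-- Degree of an index. -/
abbrev covDeg (i : covIdx P F) : ℤ := i.1

/-- Degree function for the telescope. -/
abbrev telDeg (j : ℕ × covIdx P F) : ℤ := covDeg P F j.2

/-- The family of shifted copies of `P` indexed by `covIdx`. -/
noncomputable abbrev covFam (i : covIdx P F) : C := P⟦covDeg P F i⟧

/-- The family of shifted copies of `P` indexed by the telescope index. -/
noncomputable abbrev telFam (j : ℕ × covIdx P F) : C := P⟦telDeg P F j⟧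

/-- The canonical free cover of `F`. -/
noncomputable abbrev PP : C := ∐ covFam P F

/-- The telescope object: countably many copies of the free cover. -/
noncomputable abbrev telA : C := ∐ telFam P F

/-- The canonical map from the free cover onto `F`. -/
noncomputable def q0 : PP P F ⟶ F := Sigma.desc fun i => i.2

/-- Inclusion of the `k`-th level of the telescope. -/
noncomputable def inl (k : ℕ) : PP P F ⟶ telA P F :=
  Sigma.desc fun i => Sigma.ι (telFam P F) (k, i)

/-- Projection onto the `k`-th level of the telescope. -/
noncomputable def rk (k : ℕ) : telA P F ⟶ PP P F :=
  Sigma.desc fun j => if j.1 = k then Sigma.ι (covFam P F) j.2 else 0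

/-- The telescope shift map, twisted by an endomorphism `ê` of the free cover. -/
noncomputable def telS (ehat : PP P F ⟶ PP P F) : telA P F ⟶ telA P F :=
  Sigma.desc fun j => Sigma.ι (covFam P F) j.2 ≫ ehat ≫
    inl P F (j.1 + 1)

/-- The canonical map from the telescope to `F`. -/
noncomputable def telG : telA P F ⟶ F := Sigma.desc fun j => j.2.2

@[simp] theorem iota_inl (k : ℕ) (i : covIdx P F) :
    Sigma.ι (covFam P F) i ≫ inl P F k =
      Sigma.ι (telFam P F) (k, i) := by
  simp [inl]

@[simp] theorem iota_q0 (i : covIdx P F) :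
    Sigma.ι (covFam P F) i ≫ q0 P F = i.2 := by
  simp [q0]

@[simp] theorem iota_telG (j : ℕ × covIdx P F) :
    Sigma.ι (telFam P F) j ≫ telG P F = j.2.2 := by
  simp [telG]

@[simp] theorem iota_telS (ehat : PP P F ⟶ PP P F) (j : ℕ × covIdx P F) :
    Sigma.ι (telFam P F) j ≫ telS P F ehat =
      Sigma.ι (covFam P F) j.2 ≫ ehat ≫ inl P F (j.1 + 1) := by
  simp [telS]

@[simp] theorem iota_rk (k : ℕ) (j : ℕ × covIdx P F) :
    Sigma.ι (telFam P F) j ≫ rk P F k =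
      if j.1 = k then Sigma.ι (covFam P F) j.2 else 0 := by
  simp only [rk]
  rw [colimit.ι_desc]
  rfl

theorem inl_telS (ehat : PP P F ⟶ PP P F) (k : ℕ) :
    inl P F k ≫ telS P F ehat = ehat ≫ inl P F (k + 1) := by
  apply Sigma.hom_ext; intro i
  rw [← Category.assoc, iota_inl, iota_telS]

theorem inl_telG (k : ℕ) : inl P F k ≫ telG P F = q0 P F := by
  apply Sigma.hom_ext; intro i
  rw [← Category.assoc, iota_inl, iota_telG, iota_q0]

theorem inl_rk (k k' : ℕ) :
    inl P F k ≫ rk P F k' = if k = k' then 𝟙 (PP P F) else 0 := by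
  apply Sigma.hom_ext; intro i
  rw [← Category.assoc, iota_inl, iota_rk]
  by_cases h : k = k'
  · simp only [h, if_pos]
    exact (Category.comp_id _).symm
  · simp [h]

theorem telS_rk0 (ehat : PP P F ⟶ PP P F) : telS P F ehat ≫ rk P F 0 = 0 := by
  apply Sigma.hom_ext; intro j
  conv_lhs => rw [← Category.assoc, iota_telS, Category.assoc, Category.assoc, inl_rk]
  simp

theorem telS_rkS (ehat : PP P F ⟶ PP P F) (k : ℕ) :
    telS P F ehat ≫ rk P F (k + 1) = rk P F k ≫ ehat := by
  apply Sigma.hom_ext; intro j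
  conv_lhs => rw [← Category.assoc, iota_telS, Category.assoc, Category.assoc, inl_rk]
  conv_rhs => rw [← Category.assoc, iota_rk]
  by_cases h : j.1 = k
  · simp [h]
  · have h' : ¬ (j.1 + 1 = k + 1) := by omega
    simp [h, h']

end Telescope

section Telescope2

attribute [local instance] Classical.propDecidable

variable {C : Type u} [Category.{v} C] [Preadditive C] [HasZeroObject C]
  [HasShift C ℤ] [∀ n : ℤ, (shiftFunctor C n).Additive] [Pretriangulated C]
  [HasCoproducts.{v} C]

variable (P F : C)

/-- Level decomposition of maps into the telescope. -/
theorem tel_decomp (hcpt : IsCompactObj P) (n : ℤ) (z : P⟦n⟧ ⟶ telA P F) :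
    ∃ K : ℕ, z = ∑ k ∈ Finset.range (K+1), (z ≫ rk P F k) ≫ inl P F k := by
  have hbound : ∀ (z : P⟦n⟧ ⟶ telA P F) (K : ℕ),
      z = (∑ k ∈ Finset.range (K+1), (z ≫ rk P F k) ≫ inl P F k) →
      ∀ k', K < k' → z ≫ rk P F k' = 0 := by
    intro z K hz k' hk'
    conv_lhs => rw [hz]
    rw [Preadditive.sum_comp]
    apply Finset.sum_eq_zero
    intro k hk
    rw [Category.assoc, inl_rk,
      if_neg (show ¬ k = k' by have := Finset.mem_range.mp hk; omega), comp_zero]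
  have hext : ∀ (z : P⟦n⟧ ⟶ telA P F) (K K' : ℕ), K ≤ K' →
      z = (∑ k ∈ Finset.range (K+1), (z ≫ rk P F k) ≫ inl P F k) →
      z = (∑ k ∈ Finset.range (K'+1), (z ≫ rk P F k) ≫ inl P F k) := by
    intro z K K' hKK hz
    have hsplit : ∑ k ∈ Finset.range (K'+1), (z ≫ rk P F k) ≫ inl P F k =
        (∑ k ∈ Finset.range (K+1), (z ≫ rk P F k) ≫ inl P F k) +
          ∑ k ∈ Finset.Ico (K+1) (K'+1), (z ≫ rk P F k) ≫ inl P F k := by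
      rw [Finset.range_eq_Ico, Finset.range_eq_Ico]
      exact (Finset.sum_Ico_consecutive (fun k => (z ≫ rk P F k) ≫ inl P F k) (by omega : 0 ≤ K + 1)
        (by omega : K + 1 ≤ K' + 1)).symm
    rw [hsplit, Finset.sum_eq_zero (s := Finset.Ico (K+1) (K'+1))
      (f := fun k => (z ≫ rk P F k) ≫ inl P F k) (fun k hk => by
      show (z ≫ rk P F k) ≫ inl P F k = 0
      rw [hbound z K hz k (by have := (Finset.mem_Ico.mp hk).1; omega), zero_comp]), add_zero]
    exact hz
  have hsingle : ∀ (j : ℕ × covIdx P F) (u : P⟦n⟧ ⟶ telFam P F j),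
      u ≫ Sigma.ι (telFam P F) j =
        ∑ k ∈ Finset.range (j.1 + 1),
          ((u ≫ Sigma.ι (telFam P F) j) ≫ rk P F k) ≫ inl P F k := by
    intro j u
    have hterm : ∀ k, ((u ≫ Sigma.ι (telFam P F) j) ≫ rk P F k) ≫ inl P F k =
        if j.1 = k then u ≫ Sigma.ι (telFam P F) j else 0 := by
      intro k
      rw [Category.assoc u (Sigma.ι (telFam P F) j) (rk P F k), iota_rk]
      by_cases h : j.1 = k
      · subst h
        rw [if_pos rfl, if_pos rfl, Category.assoc, iota_inl]
      · rw [if_neg h, if_neg h, comp_zero, zero_comp]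
    rw [Finset.sum_congr rfl (fun k _ => hterm k), Finset.sum_ite_eq,
      if_pos (Finset.self_mem_range_succ j.1)]
  have haddmem : ∀ (z z' : P⟦n⟧ ⟶ telA P F) (K K' : ℕ),
      z = (∑ k ∈ Finset.range (K+1), (z ≫ rk P F k) ≫ inl P F k) →
      z' = (∑ k ∈ Finset.range (K'+1), (z' ≫ rk P F k) ≫ inl P F k) →
      z + z' = ∑ k ∈ Finset.range (max K K' + 1), ((z + z') ≫ rk P F k) ≫ inl P F k := by
    intro z z' K K' h₁ h₂
    have hx' := hext _ _ _ (le_max_left K K') h₁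
    have hy' := hext _ _ _ (le_max_right K K') h₂
    have hterm : ∀ k, ((z + z') ≫ rk P F k) ≫ inl P F k =
        ((z ≫ rk P F k) ≫ inl P F k) + ((z' ≫ rk P F k) ≫ inl P F k) := by
      intro k
      rw [Preadditive.add_comp, Preadditive.add_comp]
    rw [Finset.sum_congr rfl (fun k _ => hterm k), Finset.sum_add_distrib, ← hx', ← hy']
  set S : AddSubgroup (P⟦n⟧ ⟶ telA P F) :=
    { carrier := {z | ∃ K : ℕ, z = ∑ k ∈ Finset.range (K+1), (z ≫ rk P F k) ≫ inl P F k}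
      zero_mem' := ⟨0, by simp⟩
      add_mem' := fun {z} {z'} hz hz' => by
        obtain ⟨K, h₁⟩ := hz
        obtain ⟨K', h₂⟩ := hz'
        exact ⟨max K K', haddmem z z' K K' h₁ h₂⟩
      neg_mem' := fun {z} hz => by
        obtain ⟨K, h₁⟩ := hz
        refine ⟨K, ?_⟩
        have hterm : ∀ k, ((-z) ≫ rk P F k) ≫ inl P F k =
            -((z ≫ rk P F k) ≫ inl P F k) := by
          intro k
          rw [Preadditive.neg_comp, Preadditive.neg_comp]
        rw [Finset.sum_congr rfl (fun k _ => hterm k), Finset.sum_neg_distrib, ← h₁] } with hS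
  obtain ⟨x, rfl⟩ := compShift_surjective P hcpt n (telFam P F) z
  exact compShift_mem P n (telFam P F) S (fun j u => ⟨j.1, hsingle j u⟩) x

/-- `π_*`-injectivity of `1 - s`. -/
theorem tel_oneSubS_inj (hcpt : IsCompactObj P) (ehat : PP P F ⟶ PP P F) (n : ℤ)
    (z : P⟦n⟧ ⟶ telA P F) (hz : z ≫ (𝟙 (telA P F) - telS P F ehat) = 0) : z = 0 := by
  rw [Preadditive.comp_sub, Category.comp_id, sub_eq_zero] at hz
  have hck : ∀ k, z ≫ rk P F k = 0 := by
    intro k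
    induction k with
    | zero => conv_lhs => rw [hz, Category.assoc, telS_rk0, comp_zero]
    | succ k ih => conv_lhs => rw [hz, Category.assoc, telS_rkS, ← Category.assoc, ih, zero_comp]
  obtain ⟨K, hK⟩ := tel_decomp P F hcpt n z
  rw [hK]
  apply Finset.sum_eq_zero
  intro k _
  rw [hck, zero_comp]

/-- Factorization through `1 - s` of maps with vanishing total `ê`-image. -/
theorem tel_factor (ehat : PP P F ⟶ PP P F) (hee : ehat ≫ ehat = ehat) (n : ℤ)
    (z : P⟦n⟧ ⟶ telA P F) (K : ℕ)
    (hK : z = ∑ k ∈ Finset.range (K+1), (z ≫ rk P F k) ≫ inl P F k)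
    (hzE : (∑ k ∈ Finset.range (K+1), z ≫ rk P F k) ≫ ehat = 0) :
    ∃ w : P⟦n⟧ ⟶ telA P F, w ≫ (𝟙 (telA P F) - telS P F ehat) = z := by
  set ws : ℕ → (P⟦n⟧ ⟶ PP P F) := fun k => Nat.rec (motive := fun _ => (P⟦n⟧ ⟶ PP P F))
    (z ≫ rk P F 0) (fun k ih => z ≫ rk P F (k+1) + ih ≫ ehat) k with hws
  have hws0 : ws 0 = z ≫ rk P F 0 := rfl
  have hwsS : ∀ k, ws (k+1) = z ≫ rk P F (k+1) + ws k ≫ ehat := fun k => rfl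
  have hwse : ∀ k, ws k ≫ ehat = (∑ j ∈ Finset.range (k+1), z ≫ rk P F j) ≫ ehat := by
    intro k
    induction k with
    | zero => rw [hws0, Finset.sum_range_one]
    | succ k ih =>
        rw [hwsS, Preadditive.add_comp, Category.assoc (ws k) ehat ehat, hee, ih]
        conv_rhs => rw [Finset.sum_range_succ, Preadditive.add_comp]
        abel
  have hwsK : ws K ≫ ehat = 0 := by rw [hwse]; exact hzE
  have step : ∀ k, (ws k ≫ inl P F k) ≫ (𝟙 (telA P F) - telS P F ehat) =
      (ws k ≫ inl P F k) - (ws k ≫ ehat) ≫ inl P F (k+1) := by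
    intro k
    rw [Preadditive.comp_sub, Category.comp_id, Category.assoc, inl_telS, ← Category.assoc]
  have key : ∀ N, (∑ k ∈ Finset.range (N+1), ws k ≫ inl P F k) ≫ (𝟙 (telA P F) - telS P F ehat)
      = (∑ k ∈ Finset.range (N+1), (z ≫ rk P F k) ≫ inl P F k) -
        (ws N ≫ ehat) ≫ inl P F (N+1) := by
    intro N
    induction N with
    | zero => rw [Finset.sum_range_one, Finset.sum_range_one, step, hws0]
    | succ N ih =>
        rw [Finset.sum_range_succ (f := fun k => ws k ≫ inl P F k)]
        rw [Preadditive.add_comp, ih, step (N+1)]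
        conv_rhs => rw [Finset.sum_range_succ]
        have hsplit : ws (N+1) ≫ inl P F (N+1) = (z ≫ rk P F (N+1)) ≫ inl P F (N+1) +
            (ws N ≫ ehat) ≫ inl P F (N+1) := by
          rw [hwsS, Preadditive.add_comp]
        rw [hsplit]
        abel
  refine ⟨∑ k ∈ Finset.range (K+1), ws k ≫ inl P F k, ?_⟩
  rw [key K, hwsK, zero_comp, sub_zero, ← hK]

end Telescope2

section Main

variable {C : Type u} [Category.{v} C] [Preadditive C] [HasZeroObject C]
  [HasShift C ℤ] [∀ n : ℤ, (shiftFunctor C n).Additive] [Pretriangulated C]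

theorem statement_0' [IsTriangulated C] [HasCoproducts.{v} C]
    (P : C) (hcpt : IsCompactObj P) (hgen : IsGenerator P)
    (F : C) (hproj : IsProjective (piMod P F)) (X : C) :
    Function.Bijective (fun f : F ⟶ X => piGHom P f) := by
  classical
  have hfreeP' : ∀ Z : C, Function.Bijective (fun f : PP P F ⟶ Z => piGHom P f) :=
    fun Z => free_comparison P hcpt (covDeg P F) Z
  have hq0surj : (piGHom P (q0 P F)).Surj := by
    intro n y
    refine ⟨Sigma.ι (covFam P F) ⟨n, y⟩, ?_⟩
    show Sigma.ι (covFam P F) ⟨n, y⟩ ≫ q0 P F = y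
    rw [iota_q0]
  obtain ⟨σ, hσ⟩ := hproj (piMod P (PP P F)) (piMod P F) (piGHom P (q0 P F)) hq0surj
    (GHom.id (piMod P F))
  obtain ⟨ehat, heh⟩ := (hfreeP' (PP P F)).2 (σ.comp (piGHom P (q0 P F)))
  have heq : ∀ (n : ℤ) (v : P⟦n⟧ ⟶ PP P F), v ≫ ehat = σ.app n (v ≫ q0 P F) :=
    fun n v => congrArg (fun ψ => GHom.app ψ n v) heh
  have hσq : ∀ (n : ℤ) (y : P⟦n⟧ ⟶ F), σ.app n y ≫ q0 P F = y :=
    fun n y => congrArg (fun ψ => GHom.app ψ n y) hσ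
  have heq0 : ehat ≫ q0 P F = q0 P F := by
    apply (hfreeP' F).1
    apply GHom.ext; intro n v
    show v ≫ ehat ≫ q0 P F = v ≫ q0 P F
    rw [← Category.assoc, heq, hσq]
  have hee : ehat ≫ ehat = ehat := by
    apply (hfreeP' (PP P F)).1
    apply GHom.ext; intro n v
    show v ≫ ehat ≫ ehat = v ≫ ehat
    calc v ≫ ehat ≫ ehat = (v ≫ ehat) ≫ ehat := by rw [Category.assoc]
      _ = σ.app n ((v ≫ ehat) ≫ q0 P F) := heq n _
      _ = σ.app n (σ.app n (v ≫ q0 P F) ≫ q0 P F) := by rw [heq n v]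
      _ = σ.app n (v ≫ q0 P F) := by rw [hσq]
      _ = v ≫ ehat := (heq n v).symm
  obtain ⟨Cn, p, δ, hT⟩ := distinguished_cocone_triangle (𝟙 (telA P F) - telS P F ehat)
  have hsg : telS P F ehat ≫ telG P F = telG P F := by
    apply Sigma.hom_ext; intro j
    conv_rhs => rw [iota_telG]
    rw [← Category.assoc, iota_telS]
    calc (Sigma.ι (covFam P F) j.2 ≫ ehat ≫ inl P F (j.1+1)) ≫ telG P F
        = Sigma.ι (covFam P F) j.2 ≫ ehat ≫ (inl P F (j.1+1) ≫ telG P F) := by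
          simp only [Category.assoc]
      _ = Sigma.ι (covFam P F) j.2 ≫ ehat ≫ q0 P F := by rw [inl_telG]
      _ = Sigma.ι (covFam P F) j.2 ≫ q0 P F := by rw [heq0]
      _ = j.2.2 := iota_q0 P F j.2
  have h1sg : (𝟙 (telA P F) - telS P F ehat) ≫ telG P F = 0 := by
    rw [Preadditive.sub_comp, Category.id_comp, hsg, sub_self]
  obtain ⟨h, hh0⟩ : ∃ h : Cn ⟶ F, telG P F = p ≫ h := Triangle.yoneda_exact₂ _ hT (telG P F) h1sg
  have hh : telG P F = p ≫ h := hh0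
  have hhepi : ∀ (n : ℤ) (y : P⟦n⟧ ⟶ F), ∃ u : P⟦n⟧ ⟶ Cn, u ≫ h = y := by
    intro n y
    refine ⟨Sigma.ι (telFam P F) (0, ⟨n, y⟩) ≫ p, ?_⟩
    rw [Category.assoc, ← hh, iota_telG]
  have hm₁ : ∀ (n : ℤ) (z : P⟦n⟧ ⟶ telA P F),
      z ≫ (𝟙 (telA P F) - telS P F ehat) = 0 → z = 0 :=
    fun n z hz => tel_oneSubS_inj P F hcpt ehat n z hz
  have hm₁s : ∀ (m : ℤ) (v : P⟦m⟧ ⟶ (telA P F)⟦(1:ℤ)⟧),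
      v ≫ (𝟙 (telA P F) - telS P F ehat)⟦(1:ℤ)⟧' = 0 → v = 0 := by
    intro m v hv
    have h0 : (shiftHomEquiv P 1 (m-1) m (by omega) (telA P F)).symm v ≫
        (𝟙 (telA P F) - telS P F ehat) = 0 := by
      apply (shiftHomEquiv P 1 (m-1) m (by omega) (telA P F)).injective
      rw [shiftHomEquiv_natural, AddEquiv.apply_symm_apply, hv, map_zero]
    have h1 := hm₁ (m-1) _ h0
    have h2 := (shiftHomEquiv P 1 (m-1) m (by omega) (telA P F)).apply_symm_apply v
    rw [← h2, h1, map_zero]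
  have hpepi : ∀ (n : ℤ) (y : P⟦n⟧ ⟶ Cn), ∃ z, z ≫ p = y := by
    intro n y
    have hyd : y ≫ δ = 0 := by
      apply hm₁s
      have h31 : δ ≫ (𝟙 (telA P F) - telS P F ehat)⟦(1:ℤ)⟧' = 0 := comp_distTriang_mor_zero₃₁ _ hT
      rw [Category.assoc, h31, comp_zero]
    obtain ⟨z, hz⟩ := Triangle.coyoneda_exact₃ _ hT y hyd
    have hz' : y = z ≫ p := hz
    exact ⟨z, hz'.symm⟩
  have hhinj : ∀ (n : ℤ) (u : P⟦n⟧ ⟶ Cn), u ≫ h = 0 → u = 0 := by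
    intro n u hu
    obtain ⟨z, hz⟩ := hpepi n u
    have hzg : z ≫ telG P F = 0 := by rw [hh, ← Category.assoc, hz, hu]
    obtain ⟨K, hK⟩ := tel_decomp P F hcpt n z
    have hzE : (∑ k ∈ Finset.range (K+1), z ≫ rk P F k) ≫ ehat = 0 := by
      rw [heq]
      have hq : (∑ k ∈ Finset.range (K+1), z ≫ rk P F k) ≫ q0 P F = z ≫ telG P F := by
        rw [Preadditive.sum_comp]
        conv_rhs => rw [hK, Preadditive.sum_comp]
        apply Finset.sum_congr rfl
        intro k _
        symm
        rw [Category.assoc, inl_telG]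
      rw [hq, hzg, map_zero]
    obtain ⟨w, hw⟩ := tel_factor P F ehat hee n z K hK hzE
    have h12 : (𝟙 (telA P F) - telS P F ehat) ≫ p = 0 := comp_distTriang_mor_zero₁₂ _ hT
    rw [← hz, ← hw, Category.assoc, h12, comp_zero]
  obtain ⟨D, a, b, hTD⟩ := distinguished_cocone_triangle h
  have hDzero : IsZero D := by
    apply hgen
    intro n u
    have hub : u ≫ b = 0 := by
      have h31 : b ≫ h⟦(1:ℤ)⟧' = 0 := comp_distTriang_mor_zero₃₁ _ hTD
      have h4 : (u ≫ b) ≫ h⟦(1:ℤ)⟧' = 0 := by rw [Category.assoc, h31, comp_zero]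
      have h5 : (shiftHomEquiv P 1 (n-1) n (by omega) Cn).symm (u ≫ b) ≫ h = 0 := by
        apply (shiftHomEquiv P 1 (n-1) n (by omega) F).injective
        rw [shiftHomEquiv_natural, AddEquiv.apply_symm_apply, h4, map_zero]
      have h6 := hhinj (n-1) _ h5
      have h7 := (shiftHomEquiv P 1 (n-1) n (by omega) Cn).apply_symm_apply (u ≫ b)
      rw [← h7, h6, map_zero]
    obtain ⟨z', hz0⟩ : ∃ z' : P⟦n⟧ ⟶ F, u = z' ≫ a := Triangle.coyoneda_exact₃ _ hTD u hub
    have hz' : u = z' ≫ a := hz0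
    obtain ⟨y', hy'⟩ := hhepi n z'
    have h12 : h ≫ a = 0 := comp_distTriang_mor_zero₁₂ _ hTD
    rw [hz', ← hy', Category.assoc, h12, comp_zero]
  haveI hiso : IsIso h := (Triangle.isZero₃_iff_isIso₁ _ hTD).1 hDzero
  have hbijh : ∀ n : ℤ, Function.Bijective ((piGHom P h).app n) := by
    intro n
    constructor
    · intro u u' huu
      have h8 : u ≫ h = u' ≫ h := huu
      have h9 : (u - u') ≫ h = 0 := by rw [Preadditive.sub_comp, h8, sub_self]
      have := hhinj n _ h9
      rwa [sub_eq_zero] at this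
    · intro y
      obtain ⟨u, hu⟩ := hhepi n y
      exact ⟨u, hu⟩
  have hprojCn : IsProjective (piMod P Cn) :=
    isProjective_of_bijective_to (piGHom P h) hbijh hproj
  have hcompCn : ∀ Z : C, Function.Bijective (fun f : Cn ⟶ Z => piGHom P f) := by
    intro Z
    exact telescope_comparison P hcpt (telDeg P F) (𝟙 (telA P F) - telS P F ehat) p δ hT
      hm₁ hprojCn Z
  constructor
  · intro f f' hff
    have h2 : piGHom P (h ≫ f) = piGHom P (h ≫ f') := by
      apply GHom.ext; intro n u
      show u ≫ h ≫ f = u ≫ h ≫ f'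
      rw [← Category.assoc, ← Category.assoc]
      exact congrArg (fun ψ => GHom.app ψ n (u ≫ h)) hff
    have h3 := (hcompCn X).1 h2
    rwa [cancel_epi h] at h3
  · intro φ
    obtain ⟨g2, hg2⟩ := (hcompCn X).2 (φ.comp (piGHom P h))
    refine ⟨inv h ≫ g2, ?_⟩
    apply GHom.ext; intro n u
    show u ≫ inv h ≫ g2 = φ.app n u
    have h5 : (u ≫ inv h) ≫ g2 = φ.app n ((u ≫ inv h) ≫ h) :=
      congrArg (fun ψ => GHom.app ψ n (u ≫ inv h)) hg2
    rw [← Category.assoc, h5, Category.assoc, IsIso.inv_hom_id, Category.comp_id]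

end Main

/-- If `P` is a compact generator of the triangulated category `C` and
`F` is an object such that `π_* F` is a projective graded right `Λ`-module, then for
every object `X` the map `Hom_T(F, X) → Hom_Λ(π_* F, π_* X)`, `f ↦ π_* f`, is bijective. -/
theorem statement_0 [IsTriangulated C] [HasCoproducts.{v} C]
    (P : C) (hcpt : IsCompactObj P) (hgen : IsGenerator P)
    (F : C) (hproj : IsProjective (piMod P F)) (X : C) :
    Function.Bijective (fun f : F ⟶ X => piGHom P f) := by
  exact statement_0' P hcpt hgen F hproj X

end Franke
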